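/- Let $G = \mathrm{GL}_1(\mathbb{C})$ with $\eta_0(z) = \bar{z}^{-1}$ and $\epsilon = -1$, so $\eta$ acts on $\gamma \in \mathbb{C}[t,t^{-1}]^\times$ by $\eta(\gamma)(t) = \overline{\gamma(-\bar{t}^{-1})}^{-1}$. Then the map $\tau_\eta(\gamma) = \gamma \cdot \eta(\gamma)^{-1}$ surjects onto the anti-fixed set $\{\gamma : \eta(\gamma) = \gamma^{-1}\}$. -/
import Mathlib


/-- The group of units `c tᵏ` of `ℂ[t,t⁻¹]`, modelled as pairs `(c, k) ∈ ℂˣ × ℤ`. -/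
abbrev LoopUnit' : Type := ℂˣ × Multiplicative ℤ

/-- For `GL₁` with `η₀(z) = conj(z)⁻¹` and `ε = -1`, the twisted conjugation
`η(γ)(t) = conj(γ(-conj(t)⁻¹))⁻¹` sends `c tᵏ` to `conj(c)⁻¹ (-1)ᵏ tᵏ`. -/
noncomputable def etaNegOne : LoopUnit' → LoopUnit' :=
  fun γ => ((Units.map (starRingEnd ℂ).toMonoidHom γ.1)⁻¹ * (-1 : ℂˣ) ^ (Multiplicative.toAdd γ.2),
    γ.2)

/-- For `GL₁(ℂ)` with the compact form `U(1)` and `ε = -1`, the map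
`τ_η(γ) = γ ⋅ η(γ)⁻¹` surjects onto the anti-fixed set `{γ : η(γ) = γ⁻¹}`
(the `n = 1` case of Proposition 3.23 of the paper). -/
theorem gl1_eps_neg_one_tau_surjective :
    ∀ γ : LoopUnit', etaNegOne γ = γ⁻¹ →
      ∃ δ : LoopUnit', δ * (etaNegOne δ)⁻¹ = γ := by
  rintro ⟨c, k⟩ h
  rw [Prod.ext_iff] at h
  obtain ⟨h1, h2⟩ := h
  simp only [etaNegOne] at h1 h2
  -- h2 : k = k⁻¹, hence k = 1
  have hk : k = 1 := by
    have : Multiplicative.toAdd k = -Multiplicative.toAdd k := by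
      have := congrArg Multiplicative.toAdd h2
      simpa using this
    have : Multiplicative.toAdd k = 0 := by omega
    exact Multiplicative.toAdd.injective (by simpa using this)
  subst hk
  simp only [toAdd_one, zpow_zero, mul_one] at h1
  -- h1 : (Units.map conj c)⁻¹ = c⁻¹
  have hc : (starRingEnd ℂ) (c : ℂ) = (c : ℂ) := by
    have := inv_injective h1
    exact congrArg Units.val this
  have him : (c : ℂ).im = 0 := by
    have := congrArg Complex.im hc
    simp [Complex.conj_im] at this
    linarith
  have hre : (c : ℂ).re ≠ 0 := by
    intro h0
    have : (c : ℂ) = 0 := Complex.ext h0 him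
    exact c.ne_zero this
  set r : ℝ := (c : ℂ).re with hr
  have hcr : (c : ℂ) = (r : ℂ) := Complex.ext rfl (by simp [him])
  have hs : (Real.sqrt |r| : ℂ) ≠ 0 := by
    simp [Real.sqrt_eq_zero', abs_nonneg, abs_pos, hre, not_le, abs_eq_zero]
  refine ⟨(Units.mk0 _ hs, if r > 0 then 1 else Multiplicative.ofAdd 1), ?_⟩
  have hmapval : ((Units.map (starRingEnd ℂ).toMonoidHom (Units.mk0 _ hs)) : ℂ)
      = (Real.sqrt |r| : ℂ) := by
    simp [Complex.conj_ofReal]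
  rw [Prod.ext_iff]
  constructor
  · apply Units.ext
    push_cast [etaNegOne]
    rw [hcr]
    by_cases hpos : r > 0
    · simp only [hpos, if_pos]
      simp [Complex.conj_ofReal, ← Complex.ofReal_mul,
        Real.mul_self_sqrt (abs_nonneg r), abs_of_pos hpos]
      exact_mod_cast Real.mul_self_sqrt hpos.le
    · have hneg : r < 0 := lt_of_le_of_ne (not_lt.mp hpos) hre
      simp only [hpos, if_neg, if_false]
      simp [Complex.conj_ofReal, ← Complex.ofReal_mul,
        Real.mul_self_sqrt (abs_nonneg r), abs_of_neg hneg, zpow_one]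
      ring_nf
      norm_cast
      rw [Real.sq_sqrt (by linarith)]
      ring
    
  · simp [etaNegOne]
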